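/- Every finitely supported conservative integer flow on the edges of the grid is induced by some finitely supported face configuration: f = ∂₂ F, where ∂₂ takes a face configuration to the edge flow given on each edge by the difference of the circulations on its two incident faces. -/

import Mathlib

/-- An edge of the grid: `(v, false)` is the horizontal edge from `v` to `v + (1,0)`,
`(v, true)` is the vertical edge from `v` to `v + (0,1)`. -/
abbrev Edge := (ℤ × ℤ) × Bool

/-- The boundary of the square face with lower-left corner `σ`, traversed
counterclockwise, as an edge chain. -/
def bdry (σ : ℤ × ℤ) : Edge → ℤ := fun e =>
  (if e = ((σ.1, σ.2), false) then 1 else 0) +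
  (if e = ((σ.1 + 1, σ.2), true) then 1 else 0) -
  (if e = ((σ.1, σ.2 + 1), false) then 1 else 0) -
  (if e = ((σ.1, σ.2), true) then 1 else 0)

/-- `inflow(v) - outflow(v)` for the edge flow `f`. -/
def netflow (f : Edge → ℤ) (v : ℤ × ℤ) : ℤ :=
  f ((v.1 - 1, v.2), false) + f ((v.1, v.2 - 1), true)
    - f ((v.1, v.2), false) - f ((v.1, v.2), true)

/-- The edge flow induced by a face configuration: each edge gets the signed
difference of the circulations on its two incident faces. -/
def d2 (F : ℤ × ℤ → ℤ) : Edge → ℤ := fun e =>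
  if e.2 then F (e.1.1 - 1, e.1.2) - F e.1 else F e.1 - F (e.1.1, e.1.2 - 1)

def FinSupp (F : ℤ × ℤ → ℤ) : Prop := {τ | F τ ≠ 0}.Finite

/-- Telescoping sum over an integer interval. -/
lemma tele (g : ℤ → ℤ) (x : ℤ) :
    ∀ N, x ≤ N → ∑ a ∈ Finset.Icc (x + 1) N, (g (a - 1) - g a) = g x - g N := by
  intro N
  refine Int.le_induction (motive := fun M _ => ∑ a ∈ Finset.Icc (x + 1) M, (g (a - 1) - g a) = g x - g M) ?_ ?_ N
  · show ∑ a ∈ Finset.Icc (x + 1) x, (g (a - 1) - g a) = g x - g x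
    rw [Finset.Icc_eq_empty (by omega)]
    simp
  · intro n hn ih
    show ∑ a ∈ Finset.Icc (x + 1) (n + 1), (g (a - 1) - g a) = g x - g (n + 1)
    have hins : Finset.Icc (x + 1) (n + 1) = insert (n + 1) (Finset.Icc (x + 1) n) := by
      ext a; simp only [Finset.mem_Icc, Finset.mem_insert]; omega
    rw [hins, Finset.sum_insert (by simp only [Finset.mem_Icc]; omega), ih]
    ring

/-- Every finitely supported conservative flow is induced by a finitely supported
face configuration. -/
theorem stmt14 (f : Edge → ℤ) (hfin : {e : Edge | f e ≠ 0}.Finite)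
    (hcons : ∀ v : ℤ × ℤ, netflow f v = 0) :
    ∃ F : ℤ × ℤ → ℤ, FinSupp F ∧ f = d2 F := by
  classical
  set s := hfin.toFinset with hs
  set B : ℕ := s.sup (fun e => e.1.1.natAbs ⊔ e.1.2.natAbs) with hB
  set N : ℤ := (B : ℤ) + 1 with hNdef
  have hbound : ∀ e : Edge, f e ≠ 0 → -N < e.1.1 ∧ e.1.1 < N ∧ -N < e.1.2 ∧ e.1.2 < N := by
    intro e he
    have hmem : e ∈ s := by rw [hs, Set.Finite.mem_toFinset]; exact he
    have h1 : e.1.1.natAbs ⊔ e.1.2.natAbs ≤ B :=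
      Finset.le_sup (f := fun e : Edge => e.1.1.natAbs ⊔ e.1.2.natAbs) hmem
    have h2 : e.1.1.natAbs ≤ B := le_trans le_sup_left h1
    have h3 : e.1.2.natAbs ≤ B := le_trans le_sup_right h1
    omega
  have hz : ∀ e : Edge, (N ≤ e.1.1 ∨ e.1.1 ≤ -N ∨ N ≤ e.1.2 ∨ e.1.2 ≤ -N) → f e = 0 := by
    intro e he
    by_contra h
    have := hbound e h
    omega
  set F : ℤ × ℤ → ℤ := fun τ => ∑ a ∈ Finset.Icc (τ.1 + 1) N, f ((a, τ.2), true) with hF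
  -- the key identity
  have hd2 : ∀ e : Edge, d2 F e = f e := by
    rintro ⟨⟨x, y⟩, b⟩
    cases b with
    | true =>
        show F (x - 1, y) - F (x, y) = f ((x, y), true)
        rcases le_or_gt x N with hx | hx
        · have hins : Finset.Icc (x - 1 + 1) N = insert x (Finset.Icc (x + 1) N) := by
            ext a; simp [Finset.mem_Icc]; omega
          rw [hF]
          simp only
          rw [hins, Finset.sum_insert (by simp only [Finset.mem_Icc]; omega)]
          ring
        · have h1 : Finset.Icc (x - 1 + 1) N = ∅ := Finset.Icc_eq_empty (by omega)
          have h2 : Finset.Icc (x + 1) N = ∅ := Finset.Icc_eq_empty (by omega)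
          rw [hF]
          simp only
          rw [h1, h2]
          rw [hz ((x, y), true) (by left; simpa using le_of_lt hx)]
          simp
    | false =>
        show F (x, y) - F (x, y - 1) = f ((x, y), false)
        rw [hF]
        simp only
        rw [← Finset.sum_sub_distrib]
        have hterm : ∀ a ∈ Finset.Icc (x + 1) N,
            f ((a, y), true) - f ((a, y - 1), true)
              = f ((a - 1, y), false) - f ((a, y), false) := by
          intro a _
          have := hcons (a, y)
          simp only [netflow] at this
          omega
        rw [Finset.sum_congr rfl hterm]
        rcases le_or_gt x N with hx | hx
        · rw [tele (fun a => f ((a, y), false)) x N hx]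
          have : f ((N, y), false) = 0 := hz _ (by left; simp)
          omega
        · rw [Finset.Icc_eq_empty (by omega)]
          rw [hz ((x, y), false) (by left; simpa using le_of_lt hx)]
          simp
  have hfeq : f = d2 F := by
    funext e; exact (hd2 e).symm
  -- row sums vanish
  have hstep : ∀ y : ℤ, F (-N, y + 1) = F (-N, y) := by
    intro y
    have h := hd2 ((-N, y + 1), false)
    simp only [d2, Bool.false_eq_true, if_false] at h
    have h0 : f ((-N, y + 1), false) = 0 := hz _ (by right; left; simp)
    rw [h0] at h
    have : ((-N : ℤ), y + 1 - 1) = (-N, y) := by norm_num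
    rw [this] at h
    omega
  have hconst : ∀ y : ℤ, F (-N, y) = F (-N, 0) := by
    intro y
    induction y using Int.induction_on with
    | zero => rfl
    | succ i ih => rw [hstep i]; exact ih
    | pred i ih =>
        have := hstep (-(i : ℤ) - 1)
        rw [show (-(i:ℤ) - 1 + 1) = -(i:ℤ) by ring] at this
        rw [← this]
        exact ih
  have htop : F (-N, N) = 0 := by
    rw [hF]
    apply Finset.sum_eq_zero
    intro a _
    exact hz _ (by right; right; left; simp)
  have hrow : ∀ y : ℤ, F (-N, y) = 0 := by
    intro y
    rw [hconst y, ← hconst N, htop]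
  -- finite support
  have hsupF : {τ : ℤ × ℤ | F τ ≠ 0} ⊆ ↑(Finset.Icc ((-N, -N) : ℤ × ℤ) ((N, N) : ℤ × ℤ)) := by
    rintro ⟨x, y⟩ hτ
    simp only [Set.mem_setOf_eq] at hτ
    by_contra hmem
    simp only [Finset.coe_Icc, Set.mem_Icc, Prod.mk_le_mk, not_and_or, not_le] at hmem
    apply hτ
    rcases le_or_gt y (-N) with hy | hy
    · rw [hF]; exact Finset.sum_eq_zero fun a _ => hz _ (by right; right; right; simpa)
    rcases le_or_gt N y with hy2 | hy2
    · rw [hF]; exact Finset.sum_eq_zero fun a _ => hz _ (by right; right; left; simpa)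
    rcases le_or_gt N x with hx2 | hx2
    · rw [hF]
      simp only
      rw [Finset.Icc_eq_empty (by omega)]
      simp
    rcases le_or_gt (-N) x with hx | hx
    · exfalso
      rcases hmem with h | h <;> rcases h with h | h <;> omega
    · -- x < -N: F (x, y) = F (-N, y) = 0
      have : F (x, y) = F (-N, y) := by
        rw [hF]
        simp only
        refine (Finset.sum_subset ?_ ?_).symm
        · intro a ha
          simp only [Finset.mem_Icc] at ha ⊢
          omega
        · intro a ha hna
          simp only [Finset.mem_Icc] at ha hna
          exact hz _ (by right; left; simp; omega)
      rw [this, hrow]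
  exact ⟨F, Set.Finite.subset (Finset.finite_toSet _) hsupF, hfeq⟩
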